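/- arXiv:2202.09023 — 2 statements merged into one kernel-verified Lean document; each statement's English description precedes it below -/
import Mathlib

section
/- Let κ₂ = sup_x ‖∇²f(x)‖ and suppose 0 < ρ ≤ 1/κ₂. Then the Euler Shift sequence x_{k+1} = x_k + ρ∇f(x_k) satisfies f(x_{k+1}) − f(x_k) ≥ (ρ/2)‖∇f(x_k)‖² for all k (the algorithm is hill-climbing), and for every s ∈ (0, sup f) and every connected component C of {f ≥ s}, if x₀ ∈ C then the sequence remains in C and converges to a critical point of f inside C. -/
open Metric Set Filter MeasureTheory Topology
open scoped Topology RealInnerProductSpace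

abbrev Euc (d : ℕ) := EuclideanSpace ℝ (Fin d)

/-- The Hessian of `f`, as the derivative of the gradient field. -/
noncomputable def hess {d : ℕ} (f : Euc d → ℝ) (x : Euc d) : Euc d →L[ℝ] Euc d :=
  fderiv ℝ (gradient f) x

/-- The standing assumptions on the density `f`: nonnegative, integrable, vanishing at
infinity, twice differentiable with bounded and uniformly continuous zeroth, first and
second derivatives, and Morse (nonsingular Hessian at every critical point). -/
def IsNiceDensity {d : ℕ} (f : Euc d → ℝ) : Prop :=
  (∀ x, 0 ≤ f x) ∧
  Integrable f volume ∧
  Tendsto f (cocompact (Euc d)) (𝓝 0) ∧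
  Differentiable ℝ f ∧
  Differentiable ℝ (gradient f) ∧
  (∃ M, ∀ x, |f x| ≤ M) ∧
  (∃ M, ∀ x, ‖gradient f x‖ ≤ M) ∧
  (∃ M, ∀ x, ‖hess f x‖ ≤ M) ∧
  UniformContinuous f ∧
  UniformContinuous (gradient f) ∧
  UniformContinuous (hess f) ∧
  (∀ x, gradient f x = 0 → Function.Bijective (hess f x))

/-- `γ` is the gradient ascent curve of `f` starting at `x`, defined on `[0, ∞)`. -/
def IsGradFlow {d : ℕ} (f : Euc d → ℝ) (x : Euc d) (γ : ℝ → Euc d) : Prop :=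
  γ 0 = x ∧ ∀ t ∈ Ici (0:ℝ), HasDerivWithinAt γ (gradient f (γ t)) (Ici 0) t

/-- The Euler Shift sequence with step size `ρ` started at `x₀`. -/
def IsEulerShiftSeq {d : ℕ} (f : Euc d → ℝ) (ρ : ℝ) (x₀ : Euc d) (x : ℕ → Euc d) : Prop :=
  x 0 = x₀ ∧ ∀ k : ℕ, x (k+1) = x k + ρ • gradient f (x k)

lemma curve_hasDerivAt {d : ℕ} {f : Euc d → ℝ} (hdiff : Differentiable ℝ f)
    (x v : Euc d) (t : ℝ) :
    HasDerivAt (fun t : ℝ => f (x + t • v)) (⟪gradient f (x + t • v), v⟫) t := by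
  have hc : HasDerivAt (fun t : ℝ => x + t • v) v t := by
    simpa using ((hasDerivAt_id t).smul_const v).const_add x
  have hfd := ((hdiff (x + t • v)).hasGradientAt.hasFDerivAt)
  have := hfd.comp_hasDerivAt t hc
  simpa [Function.comp_def] using this

lemma grad_lipschitz {d : ℕ} {f : Euc d → ℝ} (hg : Differentiable ℝ (gradient f))
    {κ : ℝ} (hκ : ∀ y, ‖hess f y‖ ≤ κ) (a b : Euc d) :
    ‖gradient f b - gradient f a‖ ≤ κ * ‖b - a‖ := by
  exact convex_univ.norm_image_sub_le_of_norm_fderiv_le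
    (fun y _ => hg y) (fun y _ => hκ y) trivial trivial

lemma descent {d : ℕ} {f : Euc d → ℝ} (hdiff : Differentiable ℝ f)
    (hg : Differentiable ℝ (gradient f)) {κ : ℝ} (hκ : ∀ y, ‖hess f y‖ ≤ κ)
    (x v : Euc d) :
    f x + ⟪gradient f x, v⟫ - κ / 2 * ‖v‖ ^ 2 ≤ f (x + v) := by
  set h : ℝ → ℝ := fun t => f (x + t • v) - t * ⟪gradient f x, v⟫ + κ / 2 * t ^ 2 * ‖v‖ ^ 2 with hh
  have hder : ∀ t : ℝ, HasDerivAt h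
      (⟪gradient f (x + t • v), v⟫ - ⟪gradient f x, v⟫ + κ / 2 * (2 * t) * ‖v‖ ^ 2) t := by
    intro t
    have h1 := curve_hasDerivAt hdiff x v t
    have h2 : HasDerivAt (fun t : ℝ => t * ⟪gradient f x, v⟫) (⟪gradient f x, v⟫) t := by
      simpa using (hasDerivAt_id t).mul_const ⟪gradient f x, v⟫
    have h3 : HasDerivAt (fun t : ℝ => κ / 2 * t ^ 2 * ‖v‖ ^ 2) (κ / 2 * (2 * t) * ‖v‖ ^ 2) t := by
      have := ((hasDerivAt_pow 2 t).const_mul (κ / 2)).mul_const (‖v‖ ^ 2)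
      simpa [mul_comm, mul_assoc, mul_left_comm] using this
    exact (h1.sub h2).add h3
  have hmono : MonotoneOn h (Icc (0:ℝ) 1) := by
    apply monotoneOn_of_hasDerivWithinAt_nonneg (convex_Icc 0 1)
      (fun t _ => (hder t).continuousAt.continuousWithinAt)
      (fun t _ => ((hder t).hasDerivWithinAt))
    intro t ht
    rw [interior_Icc] at ht
    have hlip : ‖gradient f (x + t • v) - gradient f x‖ ≤ κ * (t * ‖v‖) := by
      have := grad_lipschitz hg hκ x (x + t • v)
      simpa [norm_smul, abs_of_nonneg ht.1.le] using this
    have hinner : -(κ * (t * ‖v‖) * ‖v‖) ≤ ⟪gradient f (x + t • v) - gradient f x, v⟫ := by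
      have := abs_real_inner_le_norm (gradient f (x + t • v) - gradient f x) v
      nlinarith [abs_nonneg (⟪gradient f (x + t • v) - gradient f x, v⟫),
        neg_abs_le (⟪gradient f (x + t • v) - gradient f x, v⟫), norm_nonneg v,
        mul_le_mul_of_nonneg_right hlip (norm_nonneg v)]
    rw [inner_sub_left] at hinner
    nlinarith [sq_nonneg (‖v‖)]
  have := hmono (Set.left_mem_Icc.2 zero_le_one) (Set.right_mem_Icc.2 zero_le_one) zero_le_one
  simp only [hh] at this
  simp only [zero_smul, add_zero, one_smul, zero_mul, one_pow, mul_one] at this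
  linarith

/-- Every zero of the gradient of a nice density is isolated. -/
lemma isolated_zero {d : ℕ} {f : Euc d → ℝ} (hf : IsNiceDensity f)
    {z : Euc d} (hz : gradient f z = 0) :
    ∃ r > 0, ∀ w, dist w z < r → gradient f w = 0 → w = z := by
  obtain ⟨-, -, -, hdiff, hg, -, -, -, -, -, huc2, hmorse⟩ := hf
  have hbij := hmorse z hz
  have hcd : ContDiff ℝ 1 (gradient f) :=
    contDiff_one_iff_fderiv.2 ⟨hg, huc2.continuous⟩
  set e : Euc d ≃L[ℝ] Euc d :=
    (LinearEquiv.ofBijective (hess f z : Euc d →ₗ[ℝ] Euc d) hbij).toContinuousLinearEquiv with he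
  have hecoe : (e : Euc d →L[ℝ] Euc d) = hess f z := by
    ext v; rfl
  have hs : HasStrictFDerivAt (gradient f) (e : Euc d →L[ℝ] Euc d) z := by
    rw [hecoe]
    exact hcd.contDiffAt.hasStrictFDerivAt (by norm_num)
  have hev := hs.eventually_left_inverse
  rcases Metric.eventually_nhds_iff.1 hev with ⟨r, hr, hball⟩
  refine ⟨r, hr, fun w hw hw0 => ?_⟩
  have h1 : hs.localInverse _ _ _ (gradient f w) = w := hball hw
  have h2 : hs.localInverse _ _ _ (gradient f z) = z := by
    apply hball; simpa using hr
  rw [hw0] at h1; rw [hz] at h2; rw [← h1]; exact h2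

set_option maxHeartbeats 2000000 in
/-- For `0 < ρ ≤ 1/κ₂`, Euler Shift is hill-climbing with
`f(x_{k+1}) − f(x_k) ≥ (ρ/2)‖∇f(x_k)‖²`, and when started inside a connected component `C` of
an upper level set `{f ≥ s}` (with `0 < s < sup f`), the sequence stays in `C` and converges
to a critical point of `f` inside `C`. -/
theorem eulerShift_hill_climbing_and_converges
    {d : ℕ} (hd : 0 < d) (f : Euc d → ℝ) (hf : IsNiceDensity f)
    (ρ : ℝ) (hρ0 : 0 < ρ) (hρ : ρ ≤ 1 / (⨆ x : Euc d, ‖hess f x‖))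
    (x₀ : Euc d) (x : ℕ → Euc d) (hx : IsEulerShiftSeq f ρ x₀ x) :
    (∀ k : ℕ, f (x k) + (ρ / 2) * ‖gradient f (x k)‖ ^ 2 ≤ f (x (k+1))) ∧
    (∀ s ∈ Ioo (0:ℝ) (⨆ y, f y), s ≤ f x₀ →
      (∀ k, x k ∈ connectedComponentIn {z : Euc d | s ≤ f z} x₀) ∧
      ∃ z ∈ connectedComponentIn {z : Euc d | s ≤ f z} x₀,
        gradient f z = 0 ∧ Tendsto x atTop (𝓝 z)) := by
  classical
  obtain ⟨hx0, hxs⟩ := hx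
  obtain ⟨hpos, hint, hcoc, hdiff, hg, ⟨M₀, hM₀⟩, hb1, ⟨M₂, hM₂⟩, huc0, huc1, huc2, hmorse⟩ := hf
  set g : Euc d → Euc d := gradient f with hgdef
  set κ : ℝ := ⨆ x : Euc d, ‖hess f x‖ with hκdef
  have hbdd : BddAbove (Set.range fun y : Euc d => ‖hess f y‖) :=
    ⟨M₂, by rintro - ⟨y, rfl⟩; exact hM₂ y⟩
  have hκub : ∀ y, ‖hess f y‖ ≤ κ := fun y => le_ciSup hbdd y
  have hκ0 : 0 ≤ κ := (norm_nonneg _).trans (hκub 0)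
  have hκpos : 0 < κ := by
    rcases hκ0.lt_or_eq with h | h
    · exact h
    · exfalso; rw [← h] at hρ; simp at hρ; linarith
  have hρκ : ρ * κ ≤ 1 := by
    rw [le_div_iff₀ hκpos] at hρ; linarith
  -- key estimate along the Euler segment
  have key : ∀ (y : Euc d) (c : ℝ), 0 ≤ c → c ≤ ρ →
      f y + c / 2 * ‖g y‖ ^ 2 ≤ f (y + c • g y) := by
    intro y c hc0 hcρ
    have hd := descent hdiff hg hκub y (c • g y)
    rw [real_inner_smul_right, real_inner_self_eq_norm_sq] at hd
    have hn : ‖c • g y‖ ^ 2 = c ^ 2 * ‖g y‖ ^ 2 := by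
      rw [norm_smul, mul_pow]; simp [sq_abs]
    rw [hn] at hd
    have hκc : κ * c ≤ 1 := by nlinarith
    nlinarith [mul_nonneg hc0 (sq_nonneg ‖g y‖), sq_nonneg ‖g y‖,
      mul_nonneg (mul_nonneg hc0 hc0) (sq_nonneg ‖g y‖)]
  have climb : ∀ k : ℕ, f (x k) + (ρ / 2) * ‖g (x k)‖ ^ 2 ≤ f (x (k+1)) := by
    intro k; rw [hxs k]; exact key (x k) ρ hρ0.le le_rfl
  refine ⟨climb, ?_⟩
  intro s hsIoo hsx₀
  have hs0 : 0 < s := hsIoo.1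
  set S : Set (Euc d) := {z : Euc d | s ≤ f z} with hSdef
  have hScl : IsClosed S := isClosed_le continuous_const hdiff.continuous
  have hScomp : IsCompact S := by
    have hmem : f ⁻¹' (Iio s) ∈ cocompact (Euc d) := hcoc (Iio_mem_nhds hs0)
    rcases mem_cocompact.1 hmem with ⟨K, hK, hKsub⟩
    refine hK.of_isClosed_subset hScl ?_
    intro y hy
    by_contra hyK
    have : f y < s := hKsub hyK
    exact absurd hy (by simpa [hSdef] using not_le.2 this)
  have hx₀S : x₀ ∈ S := hsx₀
  set C : Set (Euc d) := connectedComponentIn S x₀ with hCdef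
  -- monotonicity of f along the sequence
  have hmono : Monotone fun k => f (x k) := by
    refine monotone_nat_of_le_succ fun k => ?_
    have := climb k
    nlinarith [sq_nonneg ‖g (x k)‖]
  have hxkS : ∀ k, x k ∈ S := by
    intro k
    have : f (x 0) ≤ f (x k) := hmono (Nat.zero_le k)
    rw [hx0] at this
    exact le_trans hsx₀ this
  -- the sequence stays in the connected component
  have hcomp : ∀ k, x k ∈ C := by
    intro k
    induction k with
    | zero => rw [hx0]; exact mem_connectedComponentIn hx₀S
    | succ k ih =>
      have hseg : segment ℝ (x k) (x (k+1)) ⊆ S := by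
        rw [segment_eq_image']
        rintro - ⟨t, ht, rfl⟩
        have hxk1 : x (k+1) - x k = ρ • g (x k) := by rw [hxs k]; abel
        rw [hxk1]
        show s ≤ f (x k + t • ρ • g (x k))
        rw [smul_smul]
        have h1 : 0 ≤ t * ρ := mul_nonneg ht.1 hρ0.le
        have h2 : t * ρ ≤ ρ := by nlinarith [ht.2]
        have := key (x k) (t * ρ) h1 h2
        have h3 : 0 ≤ t * ρ / 2 * ‖g (x k)‖ ^ 2 :=
          mul_nonneg (by linarith) (sq_nonneg _)
        have h4 : s ≤ f (x k) := hxkS k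
        show s ≤ f _
        linarith
      have hsub : segment ℝ (x k) (x (k+1)) ⊆ connectedComponentIn S (x k) :=
        (convex_segment _ _).isPreconnected.subset_connectedComponentIn
          (left_mem_segment _ _ _) hseg
      have : x (k+1) ∈ connectedComponentIn S (x k) :=
        hsub (right_mem_segment _ _ _)
      rw [hCdef, connectedComponentIn_eq ih]
      exact this
  -- C is compact
  have hCcomp : IsCompact C := by
    have : CompactSpace S := isCompact_iff_compactSpace.1 hScomp
    rw [hCdef, connectedComponentIn_eq_image hx₀S]
    exact (isClosed_connectedComponent.isCompact).image continuous_subtype_val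
  -- f (x k) converges, hence the gradients tend to 0
  have hbddf : BddAbove (Set.range fun k => f (x k)) :=
    ⟨M₀, by rintro - ⟨k, rfl⟩; exact (le_abs_self _).trans (hM₀ _)⟩
  have hfconv : Tendsto (fun k => f (x k)) atTop (𝓝 (⨆ k, f (x k))) :=
    tendsto_atTop_ciSup hmono hbddf
  have hdiff0 : Tendsto (fun k => f (x (k+1)) - f (x k)) atTop (𝓝 0) := by
    have h1 : Tendsto (fun k => f (x (k+1))) atTop (𝓝 (⨆ k, f (x k))) :=
      hfconv.comp (tendsto_add_atTop_nat 1)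
    simpa using h1.sub hfconv
  have hsq0 : Tendsto (fun k => ρ / 2 * ‖g (x k)‖ ^ 2) atTop (𝓝 0) := by
    refine squeeze_zero (fun k => mul_nonneg (by linarith) (sq_nonneg _)) (fun k => ?_) hdiff0
    have := climb k; linarith
  have hn2 : Tendsto (fun k => ‖g (x k)‖ ^ 2) atTop (𝓝 0) := by
    have h4 := hsq0.const_mul (2 / ρ)
    rw [mul_zero] at h4
    refine h4.congr fun k => ?_
    field_simp
  have hgn0 : Tendsto (fun k => ‖g (x k)‖) atTop (𝓝 0) := by
    have h5 := (Real.continuous_sqrt.tendsto 0).comp hn2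
    rw [Real.sqrt_zero] at h5
    refine h5.congr fun k => ?_
    simp [Real.sqrt_sq (norm_nonneg _)]
  have hstep0 : Tendsto (fun k => dist (x (k+1)) (x k)) atTop (𝓝 0) := by
    have h6 := hgn0.const_mul ρ
    rw [mul_zero] at h6
    refine h6.congr fun k => ?_
    rw [dist_eq_norm, hxs k, add_sub_cancel_left, norm_smul, Real.norm_eq_abs,
      abs_of_pos hρ0]
  -- every subsequential limit is a critical point
  have hcrit : ∀ w : Euc d, ∀ φ : ℕ → ℕ, StrictMono φ →
      Tendsto (x ∘ φ) atTop (𝓝 w) → g w = 0 := by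
    intro w φ hφ hlim
    have h1 : Tendsto (fun n => g (x (φ n))) atTop (𝓝 (g w)) :=
      (hg.continuous.tendsto w).comp hlim
    have h2 : Tendsto (fun n => g (x (φ n))) atTop (𝓝 0) :=
      (tendsto_zero_iff_norm_tendsto_zero.2 hgn0).comp hφ.tendsto_atTop
    exact tendsto_nhds_unique h1 h2
  -- pick a subsequential limit z in C
  obtain ⟨z, hzC, φ, hφ, hφlim⟩ := hCcomp.tendsto_subseq hcomp
  have hzcrit : g z = 0 := hcrit z φ hφ hφlim
  have hnice : IsNiceDensity f :=
    ⟨hpos, hint, hcoc, hdiff, hg, ⟨M₀, hM₀⟩, hb1, ⟨M₂, hM₂⟩, huc0, huc1, huc2, hmorse⟩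
  obtain ⟨r, hr, hiso⟩ := isolated_zero hnice hzcrit
  refine ⟨hcomp, z, hzC, hzcrit, ?_⟩
  rw [Metric.tendsto_atTop]
  intro ε hε
  set ε' : ℝ := min ε (r / 2) with hε'def
  have hε'0 : 0 < ε' := lt_min hε (by linarith)
  have hε'r : ε' < r := (min_le_right _ _).trans_lt (by linarith)
  by_contra hcon
  push_neg at hcon
  -- it suffices to contradict: frequently dist (x n) z ≥ ε'
  have hfreq : ∀ N : ℕ, ∃ m ≥ N, ε' ≤ dist (x m) z := by
    intro N
    obtain ⟨m, hm, hm2⟩ := hcon N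
    exact ⟨m, hm, by
      have : ε' ≤ ε := min_le_left _ _
      linarith⟩
  -- frequently in the annulus
  have hsteps : ∀ᶠ k in atTop, dist (x (k+1)) (x k) < ε' / 3 := by
    have : (fun k => dist (x (k+1)) (x k)) ⁻¹' Iio (ε' / 3) ∈ atTop :=
      hstep0 (Iio_mem_nhds (by linarith))
    exact this
  obtain ⟨N₁, hN₁⟩ := eventually_atTop.1 hsteps
  set A : Set (Euc d) := closedBall z (2 * ε' / 3) \ ball z (ε' / 3) with hAdef
  have hann : ∀ N : ℕ, ∃ j ≥ N, x j ∈ A := by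
    intro N
    set N₂ := max (max N N₁) 1 with hN₂
    obtain ⟨n₀, hn₀⟩ := Metric.tendsto_atTop.1 hφlim (ε' / 3) (by linarith)
    set n := max n₀ N₂ with hn
    set k := φ n with hk
    have hk1 : dist (x k) z < ε' / 3 := hn₀ n (le_max_left _ _)
    have hk2 : N₂ ≤ k := le_trans (le_max_right _ _) hφ.le_apply
    obtain ⟨m, hm, hmd⟩ := hfreq k
    have hex : ∃ j, ε' / 3 ≤ dist (x (k + j)) z :=
      ⟨m - k, by rw [Nat.add_sub_cancel' hm]; linarith⟩
    set j₀ := Nat.find hex with hj₀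
    have hspec : ε' / 3 ≤ dist (x (k + j₀)) z := Nat.find_spec hex
    have hj₀pos : j₀ ≠ 0 := by
      intro h
      rw [h, Nat.add_zero] at hspec
      linarith
    obtain ⟨j₁, hj₁⟩ := Nat.exists_eq_succ_of_ne_zero hj₀pos
    have hmin : dist (x (k + j₁)) z < ε' / 3 := by
      have := Nat.find_min hex (show j₁ < j₀ by omega)
      push_neg at this
      exact this
    have hstepb : dist (x (k + j₁ + 1)) (x (k + j₁)) < ε' / 3 := by
      apply hN₁
      have : N₁ ≤ N₂ := le_trans (le_max_right _ _) (le_max_left _ _)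
      omega
    refine ⟨k + j₀, by
      have : N ≤ N₂ := le_trans (le_max_left _ _) (le_max_left _ _)
      omega, ?_⟩
    constructor
    · rw [mem_closedBall]
      have := dist_triangle (x (k + j₀)) (x (k + j₁)) z
      have heq : k + j₀ = k + j₁ + 1 := by omega
      rw [heq]
      rw [heq] at this
      linarith
    · rw [mem_ball]
      push_neg
      linarith
  obtain ⟨ψ, hψ, hψA⟩ := extraction_of_frequently_atTop (frequently_atTop.2 hann)
  have hAcomp : IsCompact A := (isCompact_closedBall z _).diff isOpen_ball
  obtain ⟨w, hwA, ψ₂, hψ₂, hwlim⟩ := hAcomp.tendsto_subseq hψA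
  have hwcrit : g w = 0 := hcrit w (ψ ∘ ψ₂) (hψ.comp hψ₂) hwlim
  have hwz : w ≠ z := by
    intro h
    apply hwA.2
    rw [h, mem_ball, dist_self]
    linarith
  have hwr : dist w z < r := by
    have := mem_closedBall.1 hwA.1
    linarith
  exact hwz (hiso w hwr hwcrit)
end

section
/- Euler Shift is consistent: for every mode x⋆ of f and every point x₀ in the basin of attraction of x⋆, there exists ρ₀ > 0 such that for every 0 < ρ ≤ ρ₀, the Euler Shift sequence with step size ρ started at x₀ converges to x⋆. -/
open Metric Set Filter MeasureTheory Topology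
open scoped Topology RealInnerProductSpace

/- ### Auxiliary lemmas -/

lemma gradLip {d : ℕ} {f : Euc d → ℝ} (hdg : Differentiable ℝ (gradient f))
    {M₂ : ℝ} (hM₂ : ∀ x, ‖hess f x‖ ≤ M₂) (p q : Euc d) :
    ‖gradient f p - gradient f q‖ ≤ M₂ * ‖p - q‖ := by
  apply Convex.norm_image_sub_le_of_norm_fderiv_le (fun x _ => hdg.differentiableAt)
    (fun x _ => hM₂ x) convex_univ (mem_univ q) (mem_univ p)

lemma fderiv_eq_innerSL {d : ℕ} (f : Euc d → ℝ) (y : Euc d) :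
    fderiv ℝ f y = innerSL ℝ (gradient f y) := by
  ext w
  simp [gradient, InnerProductSpace.toDual_apply_apply]

lemma hasFDerivAt_gradient {d : ℕ} {f : Euc d → ℝ} (hdg : Differentiable ℝ (gradient f))
    (x : Euc d) : HasFDerivAt (gradient f) (hess f x) x :=
  (hdg x).hasFDerivAt

lemma hess_symm {d : ℕ} {f : Euc d → ℝ} (hdiff : Differentiable ℝ f)
    (hdg : Differentiable ℝ (gradient f)) (x : Euc d) (v w : Euc d) :
    ⟪hess f x v, w⟫ = ⟪hess f x w, v⟫ := by
  have h1 : ∀ y, HasFDerivAt f (innerSL ℝ (gradient f y)) y := fun y => by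
    rw [← fderiv_eq_innerSL]; exact (hdiff y).hasFDerivAt
  have h2 : HasFDerivAt (fun y => innerSL ℝ (gradient f y))
      (((innerSL ℝ (E := Euc d)).comp (hess f x) : Euc d →L[ℝ] Euc d →L[ℝ] ℝ)) x :=
    (innerSL ℝ).hasFDerivAt.comp x (hasFDerivAt_gradient hdg x)
  have := second_derivative_symmetric h1 h2 v w
  simpa using this

lemma grad_localMax_zero {d : ℕ} {f : Euc d → ℝ} (hdiff : Differentiable ℝ f)
    {xstar : Euc d} (hmode : IsLocalMax f xstar) : gradient f xstar = 0 := by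
  have : fderiv ℝ f xstar = 0 := hmode.fderiv_eq_zero
  simp [gradient, this]

lemma neg_semidef {d : ℕ} {f : Euc d → ℝ} (hdiff : Differentiable ℝ f)
    (hdg : Differentiable ℝ (gradient f))
    {xstar : Euc d} (hmode : IsLocalMax f xstar) (v : Euc d) :
    ⟪v, hess f xstar v⟫ ≤ 0 := by
  by_contra hpos
  push_neg at hpos
  set a : ℝ := ⟪v, hess f xstar v⟫ with ha
  -- the curve c t = xstar + t • v
  set c : ℝ → Euc d := fun t => xstar + t • v with hc
  have hcderiv : ∀ t : ℝ, HasDerivAt c v t := fun t => by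
    simpa [hc] using ((hasDerivAt_id t).smul_const v).const_add xstar
  -- ψ t = ⟪v, gradient f (c t)⟫ has derivative a at 0
  set ψ : ℝ → ℝ := fun t => ⟪v, gradient f (c t)⟫ with hψ
  have hgc : HasDerivAt (fun t => gradient f (c t)) (hess f xstar v) 0 := by
    have h1 : HasFDerivAt (gradient f) (hess f xstar) (c 0) := by
      have : c 0 = xstar := by simp [hc]
      rw [this]; exact (hdg xstar).hasFDerivAt
    exact h1.comp_hasDerivAt 0 (hcderiv 0)
  have hψderiv : HasDerivAt ψ a 0 := by
    have := (innerSL ℝ v).hasFDerivAt.comp_hasDerivAt 0 hgc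
    exact this
  have hψ0 : ψ 0 = 0 := by
    simp only [hψ, hc, zero_smul, add_zero, grad_localMax_zero hdiff hmode, inner_zero_right]
  -- ψ t > 0 for small positive t
  have hslope : Tendsto (fun t => ψ t / t) (𝓝[>] 0) (𝓝 a) := by
    have h := hψderiv.hasDerivWithinAt (s := Ioi 0)
    have := hasDerivWithinAt_iff_tendsto_slope.mp h
    have h2 : Tendsto (slope ψ 0) (𝓝[>] 0) (𝓝 a) :=
      this.mono_left (nhdsWithin_mono 0 (by intro t ht; exact ⟨ht, ne_of_gt ht⟩))
    refine h2.congr' ?_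
    filter_upwards [self_mem_nhdsWithin] with t ht
    simp [slope, hψ0, div_eq_inv_mul]
  have hevent : ∀ᶠ t in 𝓝[>] (0:ℝ), 0 < ψ t := by
    filter_upwards [hslope.eventually (eventually_gt_nhds hpos), self_mem_nhdsWithin]
      with t hslt ht
    have htpos : (0:ℝ) < t := ht
    have h3 := mul_pos hslt htpos
    rwa [div_mul_cancel₀ _ (ne_of_gt htpos)] at h3
  -- extract a small interval where ψ > 0
  rcases Metric.mem_nhdsWithin_iff.mp hevent with ⟨δ, hδpos, hδ⟩
  -- local max in a neighborhood
  have hcont : Continuous c := by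
    simp only [hc]; continuity
  have hloc : ∀ᶠ t in 𝓝 (0:ℝ), f (c t) ≤ f xstar :=
    (hcont.tendsto' 0 xstar (by simp [hc])).eventually hmode
  rcases Metric.eventually_nhds_iff.mp hloc with ⟨ε, hεpos, hε⟩
  set t₀ : ℝ := min δ ε / 2 with ht₀
  have ht₀pos : 0 < t₀ := by positivity
  have ht₀δ : t₀ < δ := by
    have := min_le_left δ ε; simp only [ht₀]; linarith
  have ht₀ε : t₀ < ε := by
    have := min_le_right δ ε; simp only [ht₀]; linarith
  -- φ = f ∘ c is strictly monotone on [0, t₀]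
  set φ : ℝ → ℝ := fun t => f (c t) with hφ
  have hφderiv : ∀ t : ℝ, HasDerivAt φ (ψ t) t := fun t => by
    have h1 := (hdiff (c t)).hasFDerivAt.comp_hasDerivAt t (hcderiv t)
    have h2 : fderiv ℝ f (c t) v = ψ t := by
      have : fderiv ℝ f (c t) = innerSL ℝ (gradient f (c t)) := by
        ext w; simp [gradient, InnerProductSpace.toDual_apply_apply]
      rw [this]; simp only [innerSL_apply_apply, hψ]; exact real_inner_comm _ _
    rw [← h2]; exact h1
  have hmono : StrictMonoOn φ (Icc 0 t₀) := by
    apply strictMonoOn_of_deriv_pos (convex_Icc 0 t₀)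
    · exact (hdiff.continuous.comp hcont).continuousOn
    · intro t ht
      rw [interior_Icc] at ht
      rw [(hφderiv t).deriv]
      exact hδ ⟨by rw [mem_ball, Real.dist_eq, sub_zero, abs_of_pos ht.1]; exact lt_trans ht.2 ht₀δ, ht.1⟩
  have h1 : φ 0 < φ t₀ := hmono ⟨le_refl 0, le_of_lt ht₀pos⟩ ⟨le_of_lt ht₀pos, le_refl t₀⟩ ht₀pos
  have h2 : φ t₀ ≤ f xstar := by
    apply hε
    rw [Real.dist_eq, sub_zero, abs_of_pos ht₀pos]
    exact ht₀ε
  have h0 : φ 0 = f xstar := by simp [hφ, hc]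
  linarith

-- symmetric, neg semidef, injective ⇒ neg definite
lemma neg_def_of_inj {d : ℕ} (H : Euc d →L[ℝ] Euc d)
    (hsymm : ∀ v w : Euc d, ⟪H v, w⟫ = ⟪H w, v⟫)
    (hsemi : ∀ v : Euc d, ⟪v, H v⟫ ≤ 0)
    (hinj : Function.Injective H) (v : Euc d) (hv : v ≠ 0) :
    ⟪v, H v⟫ < 0 := by
  rcases lt_or_eq_of_le (hsemi v) with h | h
  · exact h
  exfalso
  have hHv : H v ≠ 0 := fun h0 => hv (hinj (by rw [h0, map_zero]))
  set w : Euc d := H v with hw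
  set C : ℝ := ⟪w, H w⟫ with hC
  have key : ∀ t : ℝ, 2 * t * ‖w‖^2 + t^2 * C ≤ 0 := by
    intro t
    have h1 := hsemi (v + t • w)
    have expand : ⟪v + t • w, H (v + t • w)⟫
        = ⟪v, H v⟫ + t * ⟪v, H w⟫ + t * ⟪w, H v⟫ + t^2 * ⟪w, H w⟫ := by
      simp only [map_add, _root_.map_smul, inner_add_add_self, inner_add_left, inner_add_right,
        inner_smul_left, inner_smul_right, real_inner_smul_left, real_inner_smul_right,
        conj_trivial]
      ring
    have hsym2 : ⟪v, H w⟫ = ⟪w, H v⟫ := by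
      rw [real_inner_comm]
      rw [hsymm w v]
    have hww : ⟪w, H v⟫ = ‖w‖^2 := by
      rw [hw, real_inner_self_eq_norm_sq]
    rw [expand, ← h, hsym2, hww] at h1
    nlinarith
  have hwpos : 0 < ‖w‖^2 := pow_pos (norm_pos_iff.mpr hHv) 2
  set t₀ : ℝ := min 1 (‖w‖^2 / (1 + |C|)) with ht₀
  have ht₀pos : 0 < t₀ :=
    lt_min one_pos (div_pos hwpos (by positivity))
  have h2 := key t₀
  have h3 : t₀ * C ≥ -‖w‖^2 := by
    have h4 : t₀ ≤ ‖w‖^2 / (1 + |C|) := min_le_right _ _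
    have h5 : |C| ≤ 1 + |C| := by linarith [abs_nonneg C]
    have : t₀ * |C| ≤ ‖w‖^2 := by
      calc t₀ * |C| ≤ (‖w‖^2 / (1 + |C|)) * |C| := by
            apply mul_le_mul_of_nonneg_right h4 (abs_nonneg C)
        _ ≤ ‖w‖^2 := by
            rw [div_mul_eq_mul_div, div_le_iff₀ (by positivity)]
            nlinarith [abs_nonneg C]
    nlinarith [neg_abs_le C, ht₀pos.le]
  nlinarith

lemma fderiv_eq_innerSL' {d : ℕ} (f : Euc d → ℝ) (y : Euc d) :
    fderiv ℝ f y = innerSL ℝ (gradient f y) := by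
  ext w
  simp [gradient, InnerProductSpace.toDual_apply_apply]

lemma grad_localMax_zero' {d : ℕ} {f : Euc d → ℝ} (hdiff : Differentiable ℝ f)
    {xstar : Euc d} (hmode : IsLocalMax f xstar) : gradient f xstar = 0 := by
  have : fderiv ℝ f xstar = 0 := hmode.fderiv_eq_zero
  simp [gradient, this]

lemma exists_coercive {d : ℕ} (hd : 0 < d) {f : Euc d → ℝ}
    (hdiff : Differentiable ℝ f) (hdg : Differentiable ℝ (gradient f))
    (hucH : UniformContinuous (hess f)) {xstar : Euc d}
    (hsymm : ∀ v w : Euc d, ⟪hess f xstar v, w⟫ = ⟪hess f xstar w, v⟫)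
    (hsemi : ∀ v : Euc d, ⟪v, hess f xstar v⟫ ≤ 0)
    (hbij : Function.Bijective (hess f xstar))
    (hgrad0 : gradient f xstar = 0) :
    ∃ a δ : ℝ, 0 < a ∧ a ≤ 1 ∧ 0 < δ ∧
      ∀ y : Euc d, ‖y - xstar‖ ≤ δ → ⟪y - xstar, gradient f y⟫ ≤ -a * ‖y - xstar‖^2 := by
  set H := hess f xstar with hH
  -- negative definite
  have hdef : ∀ v : Euc d, v ≠ 0 → ⟪v, H v⟫ < 0 :=
    neg_def_of_inj H hsymm hsemi hbij.injective
  -- sphere compact nonempty, get uniform constant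
  have hsph_ne : (sphere (0 : Euc d) 1).Nonempty := by
    refine ⟨EuclideanSpace.single ⟨0, hd⟩ 1, ?_⟩
    simp [EuclideanSpace.norm_single]
  have hcont : Continuous fun v : Euc d => ⟪v, H v⟫ := by
    exact (continuous_id.inner (H.continuous))
  obtain ⟨v₀, hv₀mem, hv₀max⟩ :=
    (isCompact_sphere (0 : Euc d) 1).exists_isMaxOn hsph_ne hcont.continuousOn
  set a0 : ℝ := -⟪v₀, H v₀⟫ with ha0
  have hv₀ne : v₀ ≠ 0 := by
    intro h0
    rw [mem_sphere_iff_norm, sub_zero, h0] at hv₀mem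
    simp at hv₀mem
  have ha0pos : 0 < a0 := by
    have := hdef v₀ hv₀ne
    simp only [ha0]; linarith
  -- global bound on sphere scaled
  have hglob : ∀ v : Euc d, ⟪v, H v⟫ ≤ -a0 * ‖v‖^2 := by
    intro v
    rcases eq_or_ne v 0 with rfl | hv
    · simp
    · have hn : (0:ℝ) < ‖v‖ := norm_pos_iff.mpr hv
      have hmem : (‖v‖⁻¹ • v) ∈ sphere (0 : Euc d) 1 := by
        simp [norm_smul, abs_of_pos (inv_pos.mpr hn), inv_mul_cancel₀ (ne_of_gt hn)]
      have h1 := hv₀max hmem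
      simp only [IsMaxOn, IsMaxFilter] at h1
      have h2 : ⟪‖v‖⁻¹ • v, H (‖v‖⁻¹ • v)⟫ = ‖v‖⁻¹ * ‖v‖⁻¹ * ⟪v, H v⟫ := by
        rw [_root_.map_smul]
        rw [real_inner_smul_left, real_inner_smul_right]
        ring
      have h3 : ⟪‖v‖⁻¹ • v, H (‖v‖⁻¹ • v)⟫ ≤ ⟪v₀, H v₀⟫ := h1
      rw [h2] at h3
      have h4 : ⟪v, H v⟫ ≤ ⟪v₀, H v₀⟫ * (‖v‖ * ‖v‖) := by
        have := mul_le_mul_of_nonneg_left h3 (le_of_lt (mul_pos hn hn))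
        field_simp at this ⊢
        nlinarith [this]
      calc ⟪v, H v⟫ ≤ ⟪v₀, H v₀⟫ * (‖v‖ * ‖v‖) := h4
        _ = -a0 * ‖v‖^2 := by simp only [ha0]; ring
  -- uniform continuity gives a ball where hess is still coercive
  obtain ⟨δ', hδ'pos, hδ'⟩ := Metric.uniformContinuous_iff.mp hucH (a0/2) (by linarith)
  set δ : ℝ := δ'/2 with hδdef
  have hδpos : 0 < δ := by positivity
  have hball : ∀ z : Euc d, ‖z - xstar‖ ≤ δ → ∀ v : Euc d,
      ⟪v, hess f z v⟫ ≤ -(a0/2) * ‖v‖^2 := by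
    intro z hz v
    have hdist : dist z xstar < δ' := by
      rw [dist_eq_norm]; linarith
    have h1 : ‖hess f z - H‖ ≤ a0/2 := by
      have := hδ' hdist
      rw [dist_eq_norm] at this
      exact le_of_lt this
    have h2 : ⟪v, (hess f z - H) v⟫ ≤ (a0/2) * ‖v‖^2 := by
      calc ⟪v, (hess f z - H) v⟫ ≤ ‖v‖ * ‖(hess f z - H) v‖ := real_inner_le_norm _ _
        _ ≤ ‖v‖ * (‖hess f z - H‖ * ‖v‖) := by
            apply mul_le_mul_of_nonneg_left ((hess f z - H).le_opNorm v) (norm_nonneg v)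
        _ ≤ ‖v‖ * ((a0/2) * ‖v‖) := by
            apply mul_le_mul_of_nonneg_left (mul_le_mul_of_nonneg_right h1 (norm_nonneg v))
              (norm_nonneg v)
        _ = (a0/2) * ‖v‖^2 := by ring
    have h3 : ⟪v, hess f z v⟫ = ⟪v, H v⟫ + ⟪v, (hess f z - H) v⟫ := by
      simp only [ContinuousLinearMap.sub_apply, inner_sub_right]
      ring
    rw [h3]
    have := hglob v
    nlinarith [this, h2]
  refine ⟨min (a0/2) 1, δ, lt_min (by linarith) one_pos, min_le_right _ _, hδpos, ?_⟩
  intro y hy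
  set v : Euc d := y - xstar with hv
  rcases eq_or_ne v 0 with h0 | hne
  · simp [h0]
  -- integrate the hessian bound along the segment
  set c : ℝ → Euc d := fun s => xstar + s • v with hc
  have hcderiv : ∀ s : ℝ, HasDerivAt c v s := fun s => by
    simpa [hc] using ((hasDerivAt_id s).smul_const v).const_add xstar
  set g₁ : ℝ → ℝ := fun s => ⟪v, gradient f (c s)⟫ + (a0/2) * ‖v‖^2 * s with hg₁
  have hg₁deriv : ∀ s : ℝ, HasDerivAt g₁ (⟪v, hess f (c s) v⟫ + (a0/2) * ‖v‖^2) s := by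
    intro s
    have hgc : HasDerivAt (fun u => gradient f (c u)) (hess f (c s) v) s :=
      ((hdg (c s)).hasFDerivAt).comp_hasDerivAt s (hcderiv s)
    have h1 : HasDerivAt (fun u => ⟪v, gradient f (c u)⟫) ⟪v, hess f (c s) v⟫ s := by
      have := (innerSL ℝ v).hasFDerivAt.comp_hasDerivAt s hgc
      exact this
    have h2 := h1.add ((hasDerivAt_id s).const_mul ((a0/2) * ‖v‖^2))
    simp only [mul_one] at h2
    exact h2
  have hanti : AntitoneOn g₁ (Icc 0 1) := by
    apply antitoneOn_of_deriv_nonpos (convex_Icc 0 1)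
    · exact fun x _ => (hg₁deriv x).continuousAt.continuousWithinAt
    · exact fun x _ => (hg₁deriv x).differentiableAt.differentiableWithinAt
    · intro s hs
      rw [interior_Icc] at hs
      rw [(hg₁deriv s).deriv]
      have hcs : ‖c s - xstar‖ ≤ δ := by
        have : c s - xstar = s • v := by simp [hc]
        rw [this, norm_smul, Real.norm_eq_abs, abs_of_pos hs.1]
        calc s * ‖v‖ ≤ 1 * ‖v‖ :=
              mul_le_mul_of_nonneg_right (le_of_lt hs.2) (norm_nonneg v)
          _ = ‖v‖ := one_mul _
          _ ≤ δ := hy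
      have := hball (c s) hcs v
      linarith
  have h01 : (0:ℝ) ∈ Icc (0:ℝ) 1 := ⟨le_refl 0, zero_le_one⟩
  have h11 : (1:ℝ) ∈ Icc (0:ℝ) 1 := ⟨zero_le_one, le_refl 1⟩
  have hfin := hanti h01 h11 zero_le_one
  have hg0 : g₁ 0 = 0 := by
    simp only [hg₁, hc, zero_smul, add_zero, hgrad0, inner_zero_right, mul_zero]
  have hg1 : g₁ 1 = ⟪v, gradient f y⟫ + (a0/2) * ‖v‖^2 := by
    have : c 1 = y := by simp [hc, hv]
    simp [hg₁, this]
  rw [hg0, hg1] at hfin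
  have hminle : min (a0/2) 1 ≤ a0/2 := min_le_left _ _
  have hvsq : (0:ℝ) ≤ ‖v‖^2 := sq_nonneg _
  nlinarith [hfin]

lemma gamma_lip {d : ℕ} {f : Euc d → ℝ} {γ : ℝ → Euc d}
    (hγ : ∀ t ∈ Ici (0:ℝ), HasDerivWithinAt γ (gradient f (γ t)) (Ici 0) t)
    {M : ℝ} (hM : ∀ x, ‖gradient f x‖ ≤ M) {s t : ℝ} (hs : 0 ≤ s) (hst : s ≤ t) :
    ‖γ t - γ s‖ ≤ M * (t - s) := by
  have h := Convex.norm_image_sub_le_of_norm_hasDerivWithin_le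
    (f' := fun u => gradient f (γ u)) (fun u hu => hγ u hu) (fun u _ => hM (γ u))
    (convex_Ici 0) (mem_Ici.mpr hs) (mem_Ici.mpr (le_trans hs hst))
  calc ‖γ t - γ s‖ ≤ M * ‖t - s‖ := h
    _ = M * (t - s) := by rw [Real.norm_eq_abs, abs_of_nonneg (by linarith)]

lemma truncation {d : ℕ} {f : Euc d → ℝ} {γ : ℝ → Euc d}
    (hγ : ∀ t ∈ Ici (0:ℝ), HasDerivWithinAt γ (gradient f (γ t)) (Ici 0) t)
    {M L : ℝ} (hM : ∀ x, ‖gradient f x‖ ≤ M)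
    (hLip : ∀ p q : Euc d, ‖gradient f p - gradient f q‖ ≤ L * ‖p - q‖)
    (hL0 : 0 ≤ L) {t ρ : ℝ} (ht : 0 ≤ t) (hρ : 0 < ρ) :
    ‖γ (t+ρ) - γ t - ρ • gradient f (γ t)‖ ≤ L * M * ρ^2 := by
  set w := gradient f (γ t) with hw
  set u : ℝ → Euc d := fun s => γ s - s • w with hu
  have hsub : Icc t (t+ρ) ⊆ Ici (0:ℝ) := fun s hs => le_trans ht hs.1
  have huderiv : ∀ s ∈ Icc t (t+ρ),
      HasDerivWithinAt u (gradient f (γ s) - w) (Icc t (t+ρ)) s := by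
    intro s hs
    have h1 := (hγ s (hsub hs)).mono hsub
    have h2 : HasDerivWithinAt (fun s : ℝ => s • w) w (Icc t (t+ρ)) s := by
      simpa using ((hasDerivAt_id s).smul_const w).hasDerivWithinAt
    exact h1.sub h2
  have hbound : ∀ s ∈ Icc t (t+ρ), ‖gradient f (γ s) - w‖ ≤ L * M * ρ := by
    intro s hs
    calc ‖gradient f (γ s) - w‖ ≤ L * ‖γ s - γ t‖ := hLip _ _
      _ ≤ L * (M * (s - t)) := by
          apply mul_le_mul_of_nonneg_left _ hL0
          exact gamma_lip hγ hM ht hs.1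
      _ ≤ L * (M * ρ) := by
          apply mul_le_mul_of_nonneg_left _ hL0
          apply mul_le_mul_of_nonneg_left _ (le_trans (norm_nonneg w) (hM (γ t)))
          linarith [hs.2]
      _ = L * M * ρ := by ring
  have h := Convex.norm_image_sub_le_of_norm_hasDerivWithin_le huderiv hbound
    (convex_Icc t (t+ρ)) (left_mem_Icc.mpr (by linarith)) (right_mem_Icc.mpr (by linarith))
  have heq : u (t+ρ) - u t = γ (t+ρ) - γ t - ρ • w := by
    simp only [hu]
    rw [add_smul]
    abel
  rw [heq] at h
  calc ‖γ (t+ρ) - γ t - ρ • w‖ ≤ L * M * ρ * ‖t + ρ - t‖ := h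
    _ = L * M * ρ^2 := by
        rw [show t + ρ - t = ρ by ring, Real.norm_eq_abs, abs_of_pos hρ]; ring

lemma track {d : ℕ} {f : Euc d → ℝ} {γ : ℝ → Euc d}
    (hγ : ∀ t ∈ Ici (0:ℝ), HasDerivWithinAt γ (gradient f (γ t)) (Ici 0) t)
    {M L : ℝ} (hM : ∀ x, ‖gradient f x‖ ≤ M)
    (hLip : ∀ p q : Euc d, ‖gradient f p - gradient f q‖ ≤ L * ‖p - q‖)
    (hL0 : 0 ≤ L) {ρ : ℝ} (hρ : 0 < ρ) {x : ℕ → Euc d} (hx0 : x 0 = γ 0)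
    (hxs : ∀ k : ℕ, x (k+1) = x k + ρ • gradient f (x k)) (k : ℕ) :
    ‖x k - γ (k*ρ)‖ ≤ M * ρ * ((1+ρ*L)^k - 1) := by
  have hM0 : 0 ≤ M := le_trans (norm_nonneg _) (hM (γ 0))
  induction k with
  | zero => simp [hx0]
  | succ k ih =>
    have hkρ : (0:ℝ) ≤ k*ρ := by positivity
    have htr := truncation hγ hM hLip hL0 hkρ hρ
    have heq : x (k+1) - γ ((k+1 : ℕ)*ρ)
        = (x k - γ (k*ρ)) + ρ • (gradient f (x k) - gradient f (γ (k*ρ)))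
          - (γ (k*ρ + ρ) - γ (k*ρ) - ρ • gradient f (γ (k*ρ))) := by
      rw [hxs k]
      have : ((k+1 : ℕ) : ℝ) * ρ = k*ρ + ρ := by push_cast; ring
      rw [this, smul_sub]
      abel
    have hbnd : ‖x (k+1) - γ ((k+1 : ℕ)*ρ)‖
        ≤ ‖x k - γ (k*ρ)‖ + ρ * (L * ‖x k - γ (k*ρ)‖) + L * M * ρ^2 := by
      rw [heq]
      calc ‖(x k - γ (k*ρ)) + ρ • (gradient f (x k) - gradient f (γ (k*ρ)))
          - (γ (k*ρ + ρ) - γ (k*ρ) - ρ • gradient f (γ (k*ρ)))‖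
          ≤ ‖(x k - γ (k*ρ)) + ρ • (gradient f (x k) - gradient f (γ (k*ρ)))‖
            + ‖γ (k*ρ + ρ) - γ (k*ρ) - ρ • gradient f (γ (k*ρ))‖ := norm_sub_le _ _
        _ ≤ ‖x k - γ (k*ρ)‖ + ‖ρ • (gradient f (x k) - gradient f (γ (k*ρ)))‖
            + L * M * ρ^2 := by
            have := norm_add_le (x k - γ (k*ρ)) (ρ • (gradient f (x k) - gradient f (γ (k*ρ))))
            linarith [htr]
        _ ≤ ‖x k - γ (k*ρ)‖ + ρ * (L * ‖x k - γ (k*ρ)‖) + L * M * ρ^2 := by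
            have h1 : ‖ρ • (gradient f (x k) - gradient f (γ (k*ρ)))‖
                = ρ * ‖gradient f (x k) - gradient f (γ (k*ρ))‖ := by
              rw [norm_smul, Real.norm_eq_abs, abs_of_pos hρ]
            have h2 := hLip (x k) (γ (k*ρ))
            have h3 : ρ * ‖gradient f (x k) - gradient f (γ (k*ρ))‖
                ≤ ρ * (L * ‖x k - γ (k*ρ)‖) := mul_le_mul_of_nonneg_left h2 hρ.le
            linarith [h1 ▸ h3]
    have key : ‖x k - γ (k*ρ)‖ + ρ * (L * ‖x k - γ (k*ρ)‖) + L * M * ρ^2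
        ≤ M * ρ * ((1+ρ*L)^(k+1) - 1) := by
      have hA : (1:ℝ) ≤ 1 + ρ*L := by nlinarith
      have h4 : (1 + ρ*L) * ‖x k - γ (k*ρ)‖ ≤ (1 + ρ*L) * (M * ρ * ((1+ρ*L)^k - 1)) :=
        mul_le_mul_of_nonneg_left ih (by linarith)
      have h5 : (1 + ρ*L) * (M * ρ * ((1+ρ*L)^k - 1)) + L * M * ρ^2
          = M * ρ * ((1+ρ*L)^(k+1) - 1) := by
        rw [pow_succ]
        ring
      nlinarith [h4, h5]
    calc ‖x (k+1) - γ ((k+1 : ℕ)*ρ)‖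
        ≤ ‖x k - γ (k*ρ)‖ + ρ * (L * ‖x k - γ (k*ρ)‖) + L * M * ρ^2 := hbnd
      _ ≤ M * ρ * ((1+ρ*L)^(k+1) - 1) := key

lemma contraction {d : ℕ} {f : Euc d → ℝ} {xstar : Euc d}
    {a δ L : ℝ} (ha : 0 < a) (ha1 : a ≤ 1) (hL1 : 1 ≤ L)
    (hcoer : ∀ y : Euc d, ‖y - xstar‖ ≤ δ → ⟪y - xstar, gradient f y⟫ ≤ -a * ‖y - xstar‖^2)
    (hLip : ∀ p q : Euc d, ‖gradient f p - gradient f q‖ ≤ L * ‖p - q‖)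
    (hgrad0 : gradient f xstar = 0)
    {ρ : ℝ} (hρ : 0 < ρ) (hρa : ρ ≤ a / L^2)
    {y : Euc d} (hy : ‖y - xstar‖ ≤ δ) :
    ‖y + ρ • gradient f y - xstar‖^2 ≤ (1 - ρ*a) * ‖y - xstar‖^2 ∧ 0 ≤ 1 - ρ*a := by
  have hL0 : (0:ℝ) < L := lt_of_lt_of_le one_pos hL1
  have h1 : ρ * L^2 ≤ a := by
    rw [le_div_iff₀ (by positivity : (0:ℝ) < L^2)] at hρa
    exact hρa
  have hL2 : (1:ℝ) ≤ L^2 := by nlinarith [hL1]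
  have hρlea : ρ ≤ a := by nlinarith [h1, mul_le_mul_of_nonneg_left hL2 hρ.le]
  have hρa1 : ρ * a ≤ 1 := by nlinarith [hρlea, ha1, ha.le, hρ.le]
  constructor
  swap
  · linarith
  set v := y - xstar with hv
  set g := gradient f y with hg
  have heq : y + ρ • g - xstar = v + ρ • g := by rw [hv]; abel
  rw [heq]
  have hns := norm_add_sq_real v (ρ • g)
  have hinner : ⟪v, ρ • g⟫ = ρ * ⟪v, g⟫ := real_inner_smul_right v g ρ
  have hgb : ‖g‖ ≤ L * ‖v‖ := by
    calc ‖g‖ = ‖gradient f y - gradient f xstar‖ := by rw [hgrad0, sub_zero]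
      _ ≤ L * ‖y - xstar‖ := hLip y xstar
  have hco := hcoer y hy
  have hn2 : ‖ρ • g‖^2 = ρ^2 * ‖g‖^2 := by
    rw [norm_smul, Real.norm_eq_abs, abs_of_pos hρ, mul_pow]
  have hgb2 : ‖g‖^2 ≤ L^2 * ‖v‖^2 := by
    have := mul_self_le_mul_self (norm_nonneg g) hgb
    calc ‖g‖^2 = ‖g‖ * ‖g‖ := sq ‖g‖
      _ ≤ (L * ‖v‖) * (L * ‖v‖) := this
      _ = L^2 * ‖v‖^2 := by ring
  have h6 : ρ * ⟪v, g⟫ ≤ ρ * (-a * ‖v‖^2) := mul_le_mul_of_nonneg_left hco hρ.le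
  have h7 : ρ^2 * ‖g‖^2 ≤ ρ^2 * (L^2 * ‖v‖^2) :=
    mul_le_mul_of_nonneg_left hgb2 (sq_nonneg ρ)
  have h8a : ρ * (ρ * L^2) ≤ ρ * a := mul_le_mul_of_nonneg_left h1 hρ.le
  have h8 : ρ * (ρ * L^2) * ‖v‖^2 ≤ ρ * a * ‖v‖^2 :=
    mul_le_mul_of_nonneg_right h8a (sq_nonneg _)
  have hfinal : ‖v‖^2 + 2 * ⟪v, ρ • g⟫ + ‖ρ • g‖^2 ≤ (1 - ρ*a) * ‖v‖^2 := by
    rw [hinner, hn2]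
    nlinarith [h6, h7, h8]
  linarith [hns, hfinal]

set_option maxHeartbeats 2000000 in
/-- Euler Shift is consistent: started at any point of the basin of
attraction of a mode `x⋆`, for `ρ` small enough the Euler Shift sequence converges to `x⋆`. -/
theorem eulerShift_consistent
    {d : ℕ} (hd : 0 < d) (f : Euc d → ℝ) (hf : IsNiceDensity f)
    (xstar : Euc d) (hmode : IsLocalMax f xstar)
    (x₀ : Euc d) (γ : ℝ → Euc d) (hγ : IsGradFlow f x₀ γ)
    (hbasin : Tendsto γ atTop (𝓝 xstar)) :
    ∃ ρ₀ > (0:ℝ), ∀ ρ, 0 < ρ → ρ ≤ ρ₀ →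
      ∀ x : ℕ → Euc d, IsEulerShiftSeq f ρ x₀ x →
        Tendsto x atTop (𝓝 xstar) := by
  obtain ⟨-, -, -, hdiff, hdg, -, ⟨M, hM⟩, ⟨M₂, hM₂⟩, -, -, hucH, hbij⟩ := hf
  have hM0 : 0 ≤ M := le_trans (norm_nonneg _) (hM 0)
  set L : ℝ := M₂ + 1 with hL
  have hM₂0 : 0 ≤ M₂ := le_trans (norm_nonneg _) (hM₂ 0)
  have hL1 : (1:ℝ) ≤ L := by simp only [hL]; linarith
  have hL0 : (0:ℝ) < L := lt_of_lt_of_le one_pos hL1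
  have hLip : ∀ p q : Euc d, ‖gradient f p - gradient f q‖ ≤ L * ‖p - q‖ := by
    intro p q
    calc ‖gradient f p - gradient f q‖ ≤ M₂ * ‖p - q‖ := gradLip hdg hM₂ p q
      _ ≤ L * ‖p - q‖ := by
          apply mul_le_mul_of_nonneg_right _ (norm_nonneg _)
          simp only [hL]; linarith
  have hgrad0 : gradient f xstar = 0 := grad_localMax_zero hdiff hmode
  obtain ⟨a, δ, hapos, ha1, hδpos, hcoer⟩ :=
    exists_coercive hd hdiff hdg hucH (hess_symm hdiff hdg xstar)
      (neg_semidef hdiff hdg hmode) (hbij xstar hgrad0) hgrad0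
  -- choose T such that γ t is close to xstar for t ≥ T
  obtain ⟨N, hN⟩ := (Metric.tendsto_atTop.mp hbasin) (δ/2) (by positivity)
  set T : ℝ := max N 0 with hT
  have hT0 : (0:ℝ) ≤ T := le_max_right _ _
  have hTclose : ∀ t : ℝ, T ≤ t → ‖γ t - xstar‖ ≤ δ/2 := by
    intro t ht
    have := hN t (le_trans (le_max_left N 0) ht)
    rw [dist_eq_norm] at this
    linarith
  -- the step-size threshold
  set ρ₀ : ℝ := min 1 (min (a / L^2) (δ/2 / ((M+1) * Real.exp (L*(T+1))))) with hρ₀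
  have hρ₀pos : 0 < ρ₀ := by
    apply lt_min one_pos
    apply lt_min (by positivity)
    positivity
  refine ⟨ρ₀, hρ₀pos, ?_⟩
  intro ρ hρ hρle x hx
  obtain ⟨hx0, hxs⟩ := hx
  have hx0γ : x 0 = γ 0 := by rw [hx0, hγ.1]
  have hρ1 : ρ ≤ 1 := le_trans hρle (min_le_left _ _)
  have hρa : ρ ≤ a / L^2 := le_trans hρle (le_trans (min_le_right _ _) (min_le_left _ _))
  have hρe : ρ ≤ δ/2 / ((M+1) * Real.exp (L*(T+1))) :=
    le_trans hρle (le_trans (min_le_right _ _) (min_le_right _ _))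
  -- the index K at which the Euler sequence is δ-close to xstar
  set K : ℕ := ⌈T / ρ⌉₊ with hK
  have hKρ1 : T ≤ K * ρ := by
    have h1 : T / ρ ≤ (K : ℝ) := Nat.le_ceil _
    calc T = (T / ρ) * ρ := by field_simp
      _ ≤ K * ρ := mul_le_mul_of_nonneg_right h1 hρ.le
  have hKρ2 : (K:ℝ) * ρ ≤ T + 1 := by
    have h1 : (K : ℝ) < T / ρ + 1 := Nat.ceil_lt_add_one (by positivity)
    have h2 : (K:ℝ) * ρ ≤ (T / ρ + 1) * ρ := mul_le_mul_of_nonneg_right h1.le hρ.le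
    calc (K:ℝ) * ρ ≤ (T / ρ + 1) * ρ := h2
      _ = T + ρ := by field_simp
      _ ≤ T + 1 := by linarith
  -- the tracking bound at step K
  have htrack := track hγ.2 hM hLip hL0.le hρ hx0γ hxs K
  have hexp : M * ρ * ((1+ρ*L)^K - 1) ≤ (M+1) * ρ * Real.exp (L*(T+1)) := by
    have h1 : (1+ρ*L)^K ≤ Real.exp (ρ*L) ^ K := by
      apply pow_le_pow_left₀ (by positivity)
      linarith [Real.add_one_le_exp (ρ*L)]
    have h2 : Real.exp (ρ*L) ^ K = Real.exp (ρ*L*K) := by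
      rw [← Real.exp_nat_mul]; ring_nf
    have h3 : Real.exp (ρ*L*K) ≤ Real.exp (L*(T+1)) := by
      apply Real.exp_le_exp.mpr
      have : ρ * L * K = L * (K * ρ) := by ring
      rw [this]
      exact mul_le_mul_of_nonneg_left hKρ2 hL0.le
    have h4 : (1+ρ*L)^K ≤ Real.exp (L*(T+1)) := le_trans h1 (h2 ▸ h3)
    have h5 : (0:ℝ) < Real.exp (L*(T+1)) := Real.exp_pos _
    nlinarith [mul_nonneg hM0 hρ.le, hρ.le]
  have hsmall : (M+1) * ρ * Real.exp (L*(T+1)) ≤ δ/2 := by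
    rw [le_div_iff₀ (by positivity : (0:ℝ) < (M+1) * Real.exp (L*(T+1)))] at hρe
    linarith [hρe]
  have hclose : ‖x K - xstar‖ ≤ δ := by
    have h1 : ‖γ (K*ρ) - xstar‖ ≤ δ/2 := hTclose _ hKρ1
    calc ‖x K - xstar‖ = ‖(x K - γ (K*ρ)) + (γ (K*ρ) - xstar)‖ := by abel_nf
      _ ≤ ‖x K - γ (K*ρ)‖ + ‖γ (K*ρ) - xstar‖ := norm_add_le _ _
      _ ≤ δ/2 + δ/2 := by
          have := le_trans htrack hexp
          have := le_trans this hsmall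
          linarith [h1]
      _ = δ := by ring
  -- contraction phase
  set q : ℝ := 1 - ρ*a with hq
  have hmain : ∀ n : ℕ, ‖x (K+n) - xstar‖ ≤ δ ∧ ‖x (K+n) - xstar‖^2 ≤ q^n * δ^2 := by
    intro n
    induction n with
    | zero =>
      refine ⟨by simpa using hclose, ?_⟩
      simpa using pow_le_pow_left₀ (norm_nonneg _) hclose 2
    | succ n ih =>
      obtain ⟨ih1, ih2⟩ := ih
      have hcon := contraction hapos ha1 hL1 hcoer hLip hgrad0 hρ hρa ih1
      have hstep : x (K+(n+1)) = x (K+n) + ρ • gradient f (x (K+n)) := hxs (K+n)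
      have hq1 : q ≤ 1 := by
        simp only [hq]
        nlinarith [mul_pos hρ hapos]
      constructor
      · have h1 : ‖x (K+(n+1)) - xstar‖^2 ≤ ‖x (K+n) - xstar‖^2 := by
          rw [hstep]
          calc ‖x (K+n) + ρ • gradient f (x (K+n)) - xstar‖^2
              ≤ q * ‖x (K+n) - xstar‖^2 := hcon.1
            _ ≤ 1 * ‖x (K+n) - xstar‖^2 :=
                mul_le_mul_of_nonneg_right hq1 (sq_nonneg _)
            _ = ‖x (K+n) - xstar‖^2 := one_mul _
        have h2 : ‖x (K+(n+1)) - xstar‖^2 ≤ δ^2 := by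
          calc ‖x (K+(n+1)) - xstar‖^2 ≤ ‖x (K+n) - xstar‖^2 := h1
            _ ≤ δ^2 := by
                have := pow_le_pow_left₀ (norm_nonneg _) ih1 2
                simpa using this
        have h3 := Real.sqrt_le_sqrt h2
        rwa [Real.sqrt_sq (norm_nonneg _), Real.sqrt_sq hδpos.le] at h3
      · rw [hstep]
        calc ‖x (K+n) + ρ • gradient f (x (K+n)) - xstar‖^2
            ≤ q * ‖x (K+n) - xstar‖^2 := hcon.1
          _ ≤ q * (q^n * δ^2) := mul_le_mul_of_nonneg_left ih2 hcon.2
          _ = q^(n+1) * δ^2 := by rw [pow_succ]; ring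
  -- conclude convergence
  have hq0 : 0 ≤ q := by
    have := contraction hapos ha1 hL1 hcoer hLip hgrad0 hρ hρa hclose
    exact this.2
  have hqlt : q < 1 := by
    simp only [hq]
    nlinarith [mul_pos hρ hapos]
  have hgeo : Tendsto (fun n : ℕ => q^n * δ^2) atTop (𝓝 0) := by
    have := tendsto_pow_atTop_nhds_zero_of_lt_one hq0 hqlt
    simpa using this.mul_const (δ^2)
  have hsq : Tendsto (fun n : ℕ => ‖x (K+n) - xstar‖^2) atTop (𝓝 0) :=
    squeeze_zero (fun n => sq_nonneg _) (fun n => (hmain n).2) hgeo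
  have hnrm : Tendsto (fun n : ℕ => ‖x (K+n) - xstar‖) atTop (𝓝 0) := by
    have h1 := hsq.sqrt
    simp only [Real.sqrt_zero] at h1
    convert h1 using 2 with n
    rw [Real.sqrt_sq (norm_nonneg _)]
  have hshift : Tendsto (fun n : ℕ => x (K+n)) atTop (𝓝 xstar) :=
    tendsto_iff_norm_sub_tendsto_zero.mpr hnrm
  have : Tendsto (fun n : ℕ => x (n+K)) atTop (𝓝 xstar) := by
    convert hshift using 2 with n
    ring_nf
  exact (tendsto_add_atTop_iff_nat K).mp this
end
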